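/- Anisotropic conformable Hardy inequality with weight |x_k|^α: let α ∈ (0,1], let Ω ⊆ (0,∞)^n be open, let a ∈ ℝ with a > α, and let p_1,…,p_n satisfy 1 < p_k < a + α and p_k(1−α) ≥ a − α for each k. Then for every nonnegative continuously differentiable function u with compact support in Ω: ∑_{k=1}^n ∫_Ω x_k^α·|D^α_{x_k} u(x)|^{p_k} d_α x ≥ ∑_{k=1}^n ((α + a − p_k)/p_k)^{p_k} ∫_Ω u(x)^{p_k}·x_k^{−α(p_k − 1)} d_α x. -/

import Mathlib

open Filter Topology MeasureTheory

/-- The conformable partial derivative of order `α` in the `k`-th coordinate: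
`D^α_{x_k} f (x) = x_k^{1-α} ∂f/∂x_k (x)`. -/
noncomputable def confPDeriv (α : ℝ) {n : ℕ} (f : (Fin n → ℝ) → ℝ) (k : Fin n)
    (x : Fin n → ℝ) : ℝ :=
  (x k) ^ (1 - α) * deriv (fun t : ℝ => f (Function.update x k t)) (x k)

open Set

lemma young_param {p q c0 A B : ℝ} (hpq : p.HolderConjugate q) (hc : 0 < c0)
    (hA : 0 ≤ A) (hB : 0 ≤ B) :
    A * B ≤ c0 * A ^ q / q + c0 ^ (1 - p) * B ^ p / p := by
  have hq0 : q ≠ 0 := hpq.symm.ne_zero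
  have hp0 : p ≠ 0 := hpq.ne_zero
  have h := Real.young_inequality_of_nonneg
    (a := B * c0 ^ (-(1/q))) (b := A * c0 ^ (1/q))
    (mul_nonneg hB (Real.rpow_nonneg hc.le _))
    (mul_nonneg hA (Real.rpow_nonneg hc.le _)) hpq
  have e0 : (B * c0 ^ (-(1/q))) * (A * c0 ^ (1/q)) = A * B := by
    have : c0 ^ (-(1/q)) * c0 ^ (1/q) = 1 := by
      rw [← Real.rpow_add hc]; simp
    calc (B * c0 ^ (-(1/q))) * (A * c0 ^ (1/q))
        = (A * B) * (c0 ^ (-(1/q)) * c0 ^ (1/q)) := by ring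
      _ = A * B := by rw [this, mul_one]
  have e1 : (B * c0 ^ (-(1/q))) ^ p = c0 ^ (1 - p) * B ^ p := by
    rw [Real.mul_rpow hB (Real.rpow_nonneg hc.le _), ← Real.rpow_mul hc.le]
    have : -(1/q) * p = 1 - p := by
      have h1 : 1/q = 1 - 1/p := by
        have := (Real.holderConjugate_iff.mp hpq).2
        rw [inv_eq_one_div, inv_eq_one_div] at this; linarith
      rw [h1]; field_simp; ring
    rw [this, mul_comm]
  have e2 : (A * c0 ^ (1/q)) ^ q = c0 * A ^ q := by
    rw [Real.mul_rpow hA (Real.rpow_nonneg hc.le _), ← Real.rpow_mul hc.le,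
      one_div, inv_mul_cancel₀ hq0, Real.rpow_one, mul_comm]
  rw [e0, e1, e2] at h
  linarith

lemma hardy1d (p γ : ℝ) (hp : 1 < p) (hβ : 0 < γ - p + 1)
    (v : ℝ → ℝ) (hv : ContDiff ℝ 1 v) (hcs : HasCompactSupport v)
    (hsupp : tsupport v ⊆ Set.Ioi 0) (hv0 : ∀ t, 0 ≤ v t) :
    ((γ - p + 1) / p) ^ p * ∫ t in Set.Ioi 0, v t ^ p * t ^ (γ - p) ≤
      ∫ t in Set.Ioi 0, t ^ γ * |deriv v t| ^ p := by
  have hp0 : (0:ℝ) < p := lt_trans zero_lt_one hp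
  set β : ℝ := γ - p + 1 with hβdef
  set q : ℝ := p / (p - 1) with hqdef
  have hp1 : p - 1 ≠ 0 := by linarith
  have hpq : p.HolderConjugate q := (Real.holderConjugate_iff_eq_conjExponent hp).2 hqdef
  have hq0 : q ≠ 0 := hpq.symm.ne_zero
  set c0 : ℝ := β / p with hc0def
  have hc0 : 0 < c0 := div_pos hβ hp0
  -- the compact set
  set K : Set ℝ := tsupport v ∪ Icc 1 2 with hKdef
  have hKc : IsCompact K := hcs.union isCompact_Icc
  have hKne : K.Nonempty := ⟨1, Or.inr (by norm_num)⟩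
  have hKpos : K ⊆ Ioi 0 := by
    rintro t (ht | ht)
    · exact hsupp ht
    · exact lt_of_lt_of_le zero_lt_one ht.1
  set A : ℝ := sInf K with hAdef
  set B : ℝ := sSup K + 1 with hBdef
  have hA0 : 0 < A := hKpos (hKc.sInf_mem hKne)
  have hAle : ∀ t ∈ K, A ≤ t := fun t ht => csInf_le hKc.bddBelow ht
  have hBge : ∀ t ∈ K, t < B := fun t ht =>
    lt_of_le_of_lt (le_csSup hKc.bddAbove ht) (by simp [hBdef])
  set c : ℝ := A / 2 with hcdef
  have hc' : 0 < c := by positivity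
  have hcA : c < A := by simp [hcdef]; linarith
  have hcB : c ≤ B := by
    have h1 : A ≤ 1 := hAle 1 (Or.inr (by norm_num))
    have h2 : (1:ℝ) < B := hBge 1 (Or.inr (by norm_num))
    linarith
  have hKsub : K ⊆ Ioo c B := fun t ht => ⟨lt_of_lt_of_le hcA (hAle t ht), hBge t ht⟩
  -- vanishing outside K
  have hvK : ∀ t ∉ K, v t = 0 := fun t ht =>
    image_eq_zero_of_notMem_tsupport (fun h => ht (Or.inl h))
  have hdvK : ∀ t ∉ K, deriv v t = 0 := fun t ht =>
    Function.notMem_support.mp (fun h => ht (Or.inl (support_deriv_subset h)))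
  -- the two integrands
  set f : ℝ → ℝ := fun t => v t ^ p * t ^ (γ - p) with hfdef
  set g : ℝ → ℝ := fun t => t ^ γ * |deriv v t| ^ p with hgdef
  have hf0 : ∀ t ∉ K, f t = 0 := by
    intro t ht; simp [hfdef, hvK t ht, Real.zero_rpow hp0.ne']
  have hg0 : ∀ t ∉ K, g t = 0 := by
    intro t ht; simp [hgdef, hdvK t ht, Real.zero_rpow hp0.ne']
  have hfI : ∫ t in Set.Ioi 0, f t = ∫ t in c..B, f t := by
    rw [MeasureTheory.setIntegral_eq_integral_of_forall_compl_eq_zero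
      (fun t ht => hf0 t (fun h => ht (hKpos h))),
      intervalIntegral.integral_eq_integral_of_support_subset]
    intro t ht
    by_contra hmem
    exact ht (hf0 t (fun h => hmem ⟨(hKsub h).1, le_of_lt (hKsub h).2⟩))
  have hgI : ∫ t in Set.Ioi 0, g t = ∫ t in c..B, g t := by
    rw [MeasureTheory.setIntegral_eq_integral_of_forall_compl_eq_zero
      (fun t ht => hg0 t (fun h => ht (hKpos h))),
      intervalIntegral.integral_eq_integral_of_support_subset]
    intro t ht
    by_contra hmem
    exact ht (hg0 t (fun h => hmem ⟨(hKsub h).1, le_of_lt (hKsub h).2⟩))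
  -- continuity facts
  have hvc : Continuous v := hv.continuous
  have hdv : Continuous (deriv v) := hv.continuous_deriv le_rfl
  have hvp : Continuous (fun t => v t ^ p) :=
    hvc.rpow_const (fun t => Or.inr hp0.le)
  have hvp1 : Continuous (fun t => v t ^ (p - 1)) :=
    hvc.rpow_const (fun t => Or.inr (by linarith))
  have habs : Continuous (fun t => |deriv v t| ^ p) :=
    hdv.abs.rpow_const (fun t => Or.inr hp0.le)
  have htr : ∀ r : ℝ, ContinuousOn (fun t : ℝ => t ^ r) (Icc c B) := by
    intro r t ht
    exact (Real.continuousAt_rpow_const t r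
      (Or.inl (ne_of_gt (lt_of_lt_of_le hc' ht.1)))).continuousWithinAt
  have huIcc : uIcc c B = Icc c B := uIcc_of_le hcB
  -- integration by parts
  have hderiv1 : ∀ t ∈ uIcc c B, HasDerivAt (fun t : ℝ => t ^ β) (β * t ^ (β - 1)) t := by
    rw [huIcc]
    intro t ht
    exact Real.hasDerivAt_rpow_const (Or.inl (ne_of_gt (lt_of_lt_of_le hc' ht.1)))
  have hderiv2 : ∀ t ∈ uIcc c B,
      HasDerivAt (fun t => v t ^ p) (p * v t ^ (p - 1) * deriv v t) t := by
    intro t _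
    have h1 : HasDerivAt v (deriv v t) t := (hv.differentiable one_ne_zero t).hasDerivAt
    have h2 := (Real.hasDerivAt_rpow_const (x := v t) (p := p) (Or.inr hp.le)).comp t h1
    simpa [mul_assoc, Function.comp_def] using h2
  have hint1 : IntervalIntegrable (fun t : ℝ => β * t ^ (β - 1)) volume c B := by
    apply ContinuousOn.intervalIntegrable
    rw [huIcc]
    exact continuousOn_const.mul (htr (β - 1))
  have hint2 : IntervalIntegrable (fun t => p * v t ^ (p - 1) * deriv v t) volume c B :=
    (((continuous_const.mul hvp1).mul hdv)).intervalIntegrable c B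
  have hBnotK : B ∉ K := fun h => lt_irrefl B (hBge B h)
  have hcnotK : c ∉ K := fun h => absurd (hAle c h) (by linarith)
  have hIBP := intervalIntegral.integral_deriv_mul_eq_sub hderiv1 hderiv2 hint1 hint2
  rw [hvK B hBnotK, hvK c hcnotK, Real.zero_rpow hp0.ne'] at hIBP
  simp only [mul_zero, zero_mul, sub_zero, sub_self] at hIBP
  -- split the integral
  have hintA : IntervalIntegrable (fun t => β * t ^ (β - 1) * v t ^ p) volume c B := by
    apply ContinuousOn.intervalIntegrable
    rw [huIcc]
    exact (continuousOn_const.mul (htr (β - 1))).mul hvp.continuousOn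
  have hintB : IntervalIntegrable
      (fun t : ℝ => t ^ β * (p * v t ^ (p - 1) * deriv v t)) volume c B := by
    apply ContinuousOn.intervalIntegrable
    rw [huIcc]
    exact (htr β).mul ((continuous_const.mul hvp1).mul hdv).continuousOn
  rw [intervalIntegral.integral_add hintA hintB] at hIBP
  have key1 : ∫ t in c..B, β * t ^ (β - 1) * v t ^ p = β * ∫ t in c..B, f t := by
    rw [← intervalIntegral.integral_const_mul]
    apply intervalIntegral.integral_congr
    intro t _
    have : β - 1 = γ - p := by rw [hβdef]; ring
    simp only [hfdef, this]
    ring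
  -- pointwise bound for the second integrand
  set bd : ℝ → ℝ := fun t => p * (c0 * f t / q + c0 ^ (1 - p) * g t / p) with hbddef
  have hpoint : ∀ t ∈ Icc c B, -(t ^ β * (p * v t ^ (p - 1) * deriv v t)) ≤ bd t := by
    intro t ht
    have ht0 : 0 < t := lt_of_lt_of_le hc' ht.1
    set Aa : ℝ := v t ^ (p - 1) * t ^ ((β - 1) / q) with hAadef
    set Bb : ℝ := |deriv v t| * t ^ (γ / p) with hBbdef
    have hAa0 : 0 ≤ Aa := mul_nonneg (Real.rpow_nonneg (hv0 t) _) (Real.rpow_nonneg ht0.le _)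
    have hBb0 : 0 ≤ Bb := mul_nonneg (abs_nonneg _) (Real.rpow_nonneg ht0.le _)
    have hsplit : t ^ ((β - 1) / q) * t ^ (γ / p) = t ^ β := by
      rw [← Real.rpow_add ht0]
      congr 1
      rw [hqdef, hβdef]
      field_simp
      ring
    have step1 : -(t ^ β * (p * v t ^ (p - 1) * deriv v t)) ≤ p * (Aa * Bb) := by
      have hfac : 0 ≤ t ^ β * (p * v t ^ (p - 1)) := by
        apply mul_nonneg (Real.rpow_nonneg ht0.le _)
        exact mul_nonneg hp0.le (Real.rpow_nonneg (hv0 t) _)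
      calc -(t ^ β * (p * v t ^ (p - 1) * deriv v t))
          = (t ^ β * (p * v t ^ (p - 1))) * (-(deriv v t)) := by ring
        _ ≤ (t ^ β * (p * v t ^ (p - 1))) * |deriv v t| :=
            mul_le_mul_of_nonneg_left (neg_le_abs _) hfac
        _ = p * (Aa * Bb) := by
            rw [hAadef, hBbdef]
            calc (t ^ β * (p * v t ^ (p - 1))) * |deriv v t|
                = p * ((v t ^ (p - 1) * |deriv v t|) * t ^ β) := by ring
              _ = p * ((v t ^ (p - 1) * |deriv v t|) * (t ^ ((β - 1) / q) * t ^ (γ / p))) := by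
                  rw [hsplit]
              _ = p * (v t ^ (p - 1) * t ^ ((β - 1) / q) * (|deriv v t| * t ^ (γ / p))) := by
                  ring
    have step2 : Aa * Bb ≤ c0 * Aa ^ q / q + c0 ^ (1 - p) * Bb ^ p / p :=
      young_param hpq hc0 hAa0 hBb0
    have eAa : Aa ^ q = f t := by
      rw [hAadef, Real.mul_rpow (Real.rpow_nonneg (hv0 t) _) (Real.rpow_nonneg ht0.le _),
        ← Real.rpow_mul (hv0 t), ← Real.rpow_mul ht0.le]
      have e1 : (p - 1) * q = p := hpq.sub_one_mul_conj
      have e2 : (β - 1) / q * q = γ - p := by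
        rw [div_mul_cancel₀ _ hq0, hβdef]; ring
      rw [e1, e2]
    have eBb : Bb ^ p = g t := by
      rw [hBbdef, Real.mul_rpow (abs_nonneg _) (Real.rpow_nonneg ht0.le _),
        ← Real.rpow_mul ht0.le]
      have e2 : γ / p * p = γ := div_mul_cancel₀ _ hp0.ne'
      rw [e2, hgdef]
      ring
    calc -(t ^ β * (p * v t ^ (p - 1) * deriv v t)) ≤ p * (Aa * Bb) := step1
      _ ≤ p * (c0 * Aa ^ q / q + c0 ^ (1 - p) * Bb ^ p / p) :=
          mul_le_mul_of_nonneg_left step2 hp0.le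
      _ = bd t := by rw [eAa, eBb]
  -- integrate the bound
  have hintBd : IntervalIntegrable bd volume c B := by
    apply ContinuousOn.intervalIntegrable
    rw [huIcc]
    apply continuousOn_const.mul
    apply ContinuousOn.add
    · exact (continuousOn_const.mul (hvp.continuousOn.mul (htr (γ - p)))).div_const q
    · exact (continuousOn_const.mul ((htr γ).mul habs.continuousOn)).div_const p
  have hmono : ∫ t in c..B, -(t ^ β * (p * v t ^ (p - 1) * deriv v t)) ≤
      ∫ t in c..B, bd t := by
    apply intervalIntegral.integral_mono_on hcB hintB.neg hintBd
    exact hpoint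
  rw [intervalIntegral.integral_neg] at hmono
  have hIf : IntervalIntegrable f volume c B := by
    apply ContinuousOn.intervalIntegrable
    rw [huIcc]
    exact hvp.continuousOn.mul (htr (γ - p))
  have hIg : IntervalIntegrable g volume c B := by
    apply ContinuousOn.intervalIntegrable
    rw [huIcc]
    exact (htr γ).mul habs.continuousOn
  have hbdsplit : ∫ t in c..B, bd t =
      (p * c0 / q) * (∫ t in c..B, f t) + c0 ^ (1 - p) * (∫ t in c..B, g t) := by
    have : ∀ t, bd t = (p * c0 / q) * f t + c0 ^ (1 - p) * g t := by
      intro t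
      rw [hbddef]
      field_simp
    rw [intervalIntegral.integral_congr (fun t _ => this t),
      intervalIntegral.integral_add ((hIf.const_mul _)) ((hIg.const_mul _)),
      intervalIntegral.integral_const_mul, intervalIntegral.integral_const_mul]
  -- combine
  set I : ℝ := ∫ t in c..B, f t with hIdef
  set J : ℝ := ∫ t in c..B, g t with hJdef
  have hfinal : c0 * I ≤ c0 ^ (1 - p) * J := by
    have h1 : β * I = -∫ t in c..B, t ^ β * (p * v t ^ (p - 1) * deriv v t) := by
      rw [← key1]; linarith
    have h2 : β * I ≤ (p * c0 / q) * I + c0 ^ (1 - p) * J := by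
      rw [h1, ← hbdsplit]; exact hmono
    have h3 : p * c0 / q = β / q := by rw [hc0def]; field_simp
    have h2' : β * I ≤ β / q * I + c0 ^ (1 - p) * J := by
      calc β * I ≤ p * c0 / q * I + c0 ^ (1 - p) * J := h2
        _ = β / q * I + c0 ^ (1 - p) * J := by rw [h3]
    have hbq : β / q = β * (p - 1) / p := by
      rw [hqdef, div_div_eq_mul_div]
    have h4 : β - β / q = c0 := by
      rw [hbq, hc0def]
      field_simp
      ring
    calc c0 * I = (β - β / q) * I := by rw [h4]
      _ = β * I - β / q * I := by ring
      _ ≤ c0 ^ (1 - p) * J := by linarith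
  have hcp1 : (0:ℝ) < c0 ^ (p - 1) := Real.rpow_pos_of_pos hc0 _
  have hmul := mul_le_mul_of_nonneg_left hfinal hcp1.le
  have e1' : c0 ^ (p - 1) * c0 = c0 ^ p := by
    rw [← Real.rpow_add_one hc0.ne' (p - 1)]
    norm_num
  have e2' : c0 ^ (p - 1) * c0 ^ (1 - p) = 1 := by
    rw [← Real.rpow_add hc0]
    norm_num
  have e1 : c0 ^ (p - 1) * (c0 * I) = c0 ^ p * I := by
    calc c0 ^ (p - 1) * (c0 * I) = (c0 ^ (p - 1) * c0) * I := by ring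
      _ = c0 ^ p * I := by rw [e1']
  have e2 : c0 ^ (p - 1) * (c0 ^ (1 - p) * J) = J := by
    calc c0 ^ (p - 1) * (c0 ^ (1 - p) * J) = (c0 ^ (p - 1) * c0 ^ (1 - p)) * J := by ring
      _ = J := by rw [e2']; ring
  rw [e1, e2] at hmul
  rw [hfI, hgI]
  exact hmul

lemma insertNth_eq_add {m : ℕ} (k : Fin (m+1)) (y : Fin m → ℝ) (s : ℝ) :
    (Fin.insertNth k s y : Fin (m+1) → ℝ) = Fin.insertNth k 0 y + s • (Pi.single k 1 : Fin (m+1) → ℝ) := by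
  funext j
  refine Fin.succAboveCases k ?_ ?_ j
  · simp
  · intro i
    simp [Pi.single_eq_of_ne (Fin.succAbove_ne k i)]

lemma update_insertNth' {m : ℕ} (k : Fin (m+1)) (y : Fin m → ℝ) (t s : ℝ) :
    Function.update (Fin.insertNth k t y : Fin (m+1) → ℝ) k s = Fin.insertNth k s y := by
  funext j
  refine Fin.succAboveCases k ?_ ?_ j
  · simp
  · intro i
    rw [Function.update_of_ne (Fin.succAbove_ne k i)]
    simp

lemma conf_eq_fderiv {n : ℕ} (α : ℝ) (u : (Fin n → ℝ) → ℝ) (hu' : ContDiff ℝ 1 u)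
    (k : Fin n) (x : Fin n → ℝ) :
    confPDeriv α u k x = (x k) ^ (1 - α) * fderiv ℝ u x (Pi.single k 1) := by
  unfold confPDeriv
  congr 1
  have hupd : ∀ t : ℝ, Function.update x k t
      = Function.update x k 0 + t • (Pi.single k 1 : Fin _ → ℝ) := by
    intro t; funext j
    by_cases hj : j = k
    · subst hj; simp
    · simp [Function.update_of_ne hj, Pi.single_eq_of_ne hj]
  have hA : HasDerivAt (fun t : ℝ => Function.update x k 0 + t • (Pi.single k 1 : Fin _ → ℝ))
      (Pi.single k 1) (x k) := by
    simpa using ((hasDerivAt_id (x k)).smul_const ((Pi.single k 1 : Fin _ → ℝ))).const_add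
      (Function.update x k 0)
  have hxid : Function.update x k 0 + x k • (Pi.single k 1 : Fin _ → ℝ) = x := by
    rw [← hupd (x k)]; exact Function.update_eq_self k x
  have hD : HasDerivAt (fun t : ℝ => u (Function.update x k 0 + t • (Pi.single k 1 : Fin _ → ℝ)))
      (fderiv ℝ u (Function.update x k 0 + x k • (Pi.single k 1 : Fin _ → ℝ)) (Pi.single k 1)) (x k) :=
    (hu'.differentiable one_ne_zero _).hasFDerivAt.comp_hasDerivAt (x k) hA
  rw [hxid] at hD
  have hfun : (fun t : ℝ => u (Function.update x k t))
      = fun t => u (Function.update x k 0 + t • (Pi.single k 1 : Fin _ → ℝ)) := by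
    funext t; rw [hupd t]
  rw [hfun, hD.deriv]

lemma hardy_slice (α a : ℝ) (hα0 : 0 < α) (hα1 : α ≤ 1) (ha : α < a)
    (m : ℕ) (Ω : Set (Fin (m+1) → ℝ)) (hΩ : IsOpen Ω)
    (hΩpos : Ω ⊆ {x : Fin (m+1) → ℝ | ∀ k, 0 < x k})
    (k : Fin (m+1)) (pk : ℝ) (hpk1 : 1 < pk) (hpk2 : pk < a + α) (hpk3 : pk * (1 - α) ≥ a - α)
    (u : (Fin (m+1) → ℝ) → ℝ) (hu' : ContDiff ℝ 1 u) (hu0' : ∀ x, 0 ≤ u x)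
    (husupp : HasCompactSupport u) (husubset : tsupport u ⊆ Ω) :
    ((α + a - pk) / pk) ^ pk
        * ∫ x in Ω, u x ^ pk * (x k) ^ (-α * (pk - 1)) * ∏ j, (x j) ^ (α - 1)
      ≤ ∫ x in Ω, (x k) ^ α * |confPDeriv α u k x| ^ pk * ∏ j, (x j) ^ (α - 1) := by
  have hpk0 : (0:ℝ) < pk := lt_trans zero_lt_one hpk1
  set γ : ℝ := α + (1 - α) * pk + (α - 1) with hγ
  have hβ : 0 < γ - pk + 1 := by nlinarith [hpk2, hpk3]
  have hcp : ∀ x, confPDeriv α u k x = (x k) ^ (1 - α) * fderiv ℝ u x (Pi.single k 1) :=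
    fun x => conf_eq_fderiv α u hu' k x
  set F : (Fin (m+1) → ℝ) → ℝ :=
    fun x => (x k) ^ α * |(x k) ^ (1 - α) * fderiv ℝ u x (Pi.single k 1)| ^ pk
      * ∏ j, (x j) ^ (α - 1) with hF
  set H : (Fin (m+1) → ℝ) → ℝ :=
    fun x => u x ^ pk * (x k) ^ (-α * (pk - 1)) * ∏ j, (x j) ^ (α - 1) with hH
  have hgoalF : ∫ x in Ω, (x k) ^ α * |confPDeriv α u k x| ^ pk * ∏ j, (x j) ^ (α - 1)
      = ∫ x in Ω, F x := by
    refine setIntegral_congr_fun hΩ.measurableSet fun x _ => ?_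
    rw [hF]; simp only [hcp]
  rw [hgoalF]
  -- vanishing off the support
  have hfd0 : ∀ x ∉ tsupport u, fderiv ℝ u x = 0 := fun x hx =>
    Function.notMem_support.mp (fun h => hx (support_fderiv_subset ℝ h))
  have hF0 : ∀ x, x ∉ tsupport u → F x = 0 := by
    intro x hx
    rw [hF]
    simp [hfd0 x hx, Real.zero_rpow hpk0.ne']
  have hH0 : ∀ x, x ∉ tsupport u → H x = 0 := by
    intro x hx
    rw [hH]
    simp [image_eq_zero_of_notMem_tsupport hx, Real.zero_rpow hpk0.ne']
  have hFΩ : ∀ x ∉ Ω, F x = 0 := fun x hx => hF0 x (fun h => hx (husubset h))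
  have hHΩ : ∀ x ∉ Ω, H x = 0 := fun x hx => hH0 x (fun h => hx (husubset h))
  rw [setIntegral_eq_integral_of_forall_compl_eq_zero hFΩ,
    setIntegral_eq_integral_of_forall_compl_eq_zero hHΩ]
  -- continuity and integrability
  have hsubP : tsupport u ⊆ {x : Fin (m+1) → ℝ | ∀ j, 0 < x j} :=
    fun x hx => hΩpos (husubset hx)
  have hfdc : Continuous (fun x : Fin (m+1) → ℝ => fderiv ℝ u x (Pi.single k (1:ℝ))) :=
    (hu'.continuous_fderiv one_ne_zero).clm_apply continuous_const
  have hnhds : ∀ x, x ∉ tsupport u → (tsupport u)ᶜ ∈ 𝓝 x := fun x hx =>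
    (isClosed_tsupport u).isOpen_compl.mem_nhds hx
  have hFcont : Continuous F := by
    rw [continuous_iff_continuousAt]
    intro x
    by_cases hx : ∀ j, 0 < x j
    · rw [hF]
      have h1 : ContinuousAt (fun x : Fin (m+1) → ℝ => (x k) ^ α) x :=
        (continuous_apply k).continuousAt.rpow_const (Or.inl (hx k).ne')
      have h2 : ContinuousAt (fun x : Fin (m+1) → ℝ => (x k) ^ (1 - α)) x :=
        (continuous_apply k).continuousAt.rpow_const (Or.inl (hx k).ne')
      have h3 : ContinuousAt (fun x : Fin (m+1) → ℝ =>
          |(x k) ^ (1 - α) * fderiv ℝ u x (Pi.single k 1)| ^ pk) x :=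
        ((h2.mul hfdc.continuousAt).abs).rpow_const (Or.inr hpk0.le)
      have h4 : ContinuousAt (fun x : Fin (m+1) → ℝ => ∏ j, (x j) ^ (α - 1)) x :=
        tendsto_finset_prod _ fun j _ =>
          (continuous_apply j).continuousAt.rpow_const (Or.inl (hx j).ne')
      exact (h1.mul h3).mul h4
    · have hx' : x ∉ tsupport u := fun h => hx (hsubP h)
      exact Filter.EventuallyEq.continuousAt (y := 0)
        (Filter.eventuallyEq_of_mem (hnhds x hx') fun z hz => hF0 z hz)
  have hHcont : Continuous H := by
    rw [continuous_iff_continuousAt]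
    intro x
    by_cases hx : ∀ j, 0 < x j
    · rw [hH]
      have h1 : ContinuousAt (fun x : Fin (m+1) → ℝ => u x ^ pk) x :=
        hu'.continuous.continuousAt.rpow_const (Or.inr hpk0.le)
      have h2 : ContinuousAt (fun x : Fin (m+1) → ℝ => (x k) ^ (-α * (pk - 1))) x :=
        (continuous_apply k).continuousAt.rpow_const (Or.inl (hx k).ne')
      have h4 : ContinuousAt (fun x : Fin (m+1) → ℝ => ∏ j, (x j) ^ (α - 1)) x :=
        tendsto_finset_prod _ fun j _ =>
          (continuous_apply j).continuousAt.rpow_const (Or.inl (hx j).ne')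
      exact (h1.mul h2).mul h4
    · have hx' : x ∉ tsupport u := fun h => hx (hsubP h)
      exact Filter.EventuallyEq.continuousAt (y := 0)
        (Filter.eventuallyEq_of_mem (hnhds x hx') fun z hz => hH0 z hz)
  have hFint : Integrable F := hFcont.integrable_of_hasCompactSupport
    (HasCompactSupport.intro husupp hF0)
  have hHint : Integrable H := hHcont.integrable_of_hasCompactSupport
    (HasCompactSupport.intro husupp hH0)
  -- Fubini via piFinSuccAbove
  set e := MeasurableEquiv.piFinSuccAbove (fun _ : Fin (m+1) => ℝ) k with he
  have hmp : MeasurePreserving e volume volume :=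
    volume_preserving_piFinSuccAbove (fun _ : Fin (m+1) => ℝ) k
  have hesymm : ∀ (t : ℝ) (y : Fin m → ℝ), e.symm (t, y) = Fin.insertNth k t y := by
    intro t y
    rw [he]
    rw [show ⇑(MeasurableEquiv.piFinSuccAbove (fun _ : Fin (m+1) => ℝ) k).symm
      = ⇑(Fin.insertNthEquiv (fun _ : Fin (m+1) => ℝ) k) from
      MeasurableEquiv.piFinSuccAbove_symm_apply _ k]
    funext j
    rw [Fin.insertNthEquiv_apply]
  have hFe : Integrable (fun z : ℝ × (Fin m → ℝ) => F (e.symm z)) (volume.prod volume) := by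
    rw [← Measure.volume_eq_prod]
    exact ((hmp.symm e).integrable_comp_emb e.symm.measurableEmbedding).mpr hFint
  have hHe : Integrable (fun z : ℝ × (Fin m → ℝ) => H (e.symm z)) (volume.prod volume) := by
    rw [← Measure.volume_eq_prod]
    exact ((hmp.symm e).integrable_comp_emb e.symm.measurableEmbedding).mpr hHint
  have hFubF : ∫ x, F x = ∫ y : Fin m → ℝ, ∫ t : ℝ, F (Fin.insertNth k t y) := by
    rw [← (hmp.symm e).integral_comp e.symm.measurableEmbedding F, Measure.volume_eq_prod,
      integral_prod_symm _ hFe]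
    simp only [hesymm]
  have hFubH : ∫ x, H x = ∫ y : Fin m → ℝ, ∫ t : ℝ, H (Fin.insertNth k t y) := by
    rw [← (hmp.symm e).integral_comp e.symm.measurableEmbedding H, Measure.volume_eq_prod,
      integral_prod_symm _ hHe]
    simp only [hesymm]
  rw [hFubF, hFubH]
  have hIF : Integrable (fun y : Fin m → ℝ => ∫ t : ℝ, F (Fin.insertNth k t y)) volume := by
    have h1 := hFe.integral_prod_right
    simpa only [hesymm] using h1
  have hIH : Integrable (fun y : Fin m → ℝ => ∫ t : ℝ, H (Fin.insertNth k t y)) volume := by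
    have h1 := hHe.integral_prod_right
    simpa only [hesymm] using h1
  -- the per-slice inequality
  have hy_ineq : ∀ y : Fin m → ℝ,
      ((α + a - pk) / pk) ^ pk * ∫ t : ℝ, H (Fin.insertNth k t y)
        ≤ ∫ t : ℝ, F (Fin.insertNth k t y) := by
    intro y
    set v : ℝ → ℝ := fun s => u (Fin.insertNth k s y) with hv
    have hvt : ∀ t : ℝ, u (Fin.insertNth k t y) = v t := fun t => by rw [hv]
    have hvd : ∀ t : ℝ,
        HasDerivAt v (fderiv ℝ u (Fin.insertNth k t y) (Pi.single k 1)) t := by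
      intro t
      have hA : HasDerivAt
          (fun s : ℝ => Fin.insertNth k 0 y + s • (Pi.single k 1 : Fin (m+1) → ℝ))
          (Pi.single k 1) t := by
        simpa using ((hasDerivAt_id t).smul_const (Pi.single k 1 : Fin (m+1) → ℝ)).const_add
          (Fin.insertNth k 0 y)
      have hD : HasDerivAt
          (fun s : ℝ => u (Fin.insertNth k 0 y + s • (Pi.single k 1 : Fin (m+1) → ℝ)))
          (fderiv ℝ u (Fin.insertNth k 0 y + t • (Pi.single k 1 : Fin (m+1) → ℝ))
            (Pi.single k 1)) t :=
        (hu'.differentiable one_ne_zero _).hasFDerivAt.comp_hasDerivAt t hA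
      rw [← insertNth_eq_add k y t] at hD
      have hfun : (fun s : ℝ => u (Fin.insertNth k 0 y + s • (Pi.single k 1 : Fin (m+1) → ℝ)))
          = v := by
        funext s; rw [hv, ← insertNth_eq_add k y s]
      rwa [hfun] at hD
    by_cases hy0 : ∃ t : ℝ, Fin.insertNth k t y ∈ tsupport u
    · obtain ⟨t0, ht0⟩ := hy0
      have hypos : ∀ j, 0 < y j := by
        intro j
        have h1 := hΩpos (husubset ht0) (k.succAbove j)
        rwa [Fin.insertNth_apply_succAbove] at h1
      set W : ℝ := ∏ j : Fin m, (y j) ^ (α - 1) with hW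
      have hWpos : 0 < W := Finset.prod_pos fun j _ => Real.rpow_pos_of_pos (hypos j) _
      -- regularity of the slice
      have hvC1 : ContDiff ℝ 1 v := by
        have h2 : ContDiff ℝ 1 (fun s : ℝ => (Fin.insertNth k s y : Fin (m+1) → ℝ)) := by
          have hrw : (fun s : ℝ => (Fin.insertNth k s y : Fin (m+1) → ℝ))
              = fun s => Fin.insertNth k 0 y + s • (Pi.single k 1 : Fin (m+1) → ℝ) :=
            funext fun s => insertNth_eq_add k y s
          rw [hrw]
          exact contDiff_const.add (contDiff_id.smul contDiff_const)
        exact hu'.comp h2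
      set C : Set ℝ := {s : ℝ | Fin.insertNth k s y ∈ tsupport u} with hC
      have hCclosed : IsClosed C := by
        apply (isClosed_tsupport u).preimage
        have hrw : (fun s : ℝ => (Fin.insertNth k s y : Fin (m+1) → ℝ))
            = fun s => Fin.insertNth k 0 y + s • (Pi.single k 1 : Fin (m+1) → ℝ) :=
          funext fun s => insertNth_eq_add k y s
        rw [hrw]
        exact continuous_const.add (continuous_id.smul continuous_const)
      have hCsub : C ⊆ (fun x : Fin (m+1) → ℝ => x k) '' tsupport u := by
        intro s hs
        exact ⟨Fin.insertNth k s y, hs, by simp⟩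
      have hCcomp : IsCompact C :=
        (husupp.image (continuous_apply k)).of_isClosed_subset hCclosed hCsub
      have hvcs : HasCompactSupport v := by
        apply HasCompactSupport.intro hCcomp
        intro s hs
        have hs' : Fin.insertNth k s y ∉ tsupport u := hs
        show u (Fin.insertNth k s y) = 0
        exact image_eq_zero_of_notMem_tsupport hs'
      have hvsupp : tsupport v ⊆ Set.Ioi 0 := by
        intro s hs
        have hsC : s ∈ C := closure_minimal
          (fun z hz => by
            by_contra hzc
            have hzc' : Fin.insertNth k z y ∉ tsupport u := hzc
            have hz0 : u (Fin.insertNth k z y) = 0 := image_eq_zero_of_notMem_tsupport hzc'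
            exact hz hz0)
          hCclosed hs
        have h1 := hΩpos (husubset hsC) k
        rwa [Fin.insertNth_apply_same] at h1
      have hv0 : ∀ s, 0 ≤ v s := fun s => hu0' _
      -- slice values of F and H
      have hprod : ∀ t : ℝ, ∏ j, (Fin.insertNth k t y j) ^ (α - 1) = t ^ (α - 1) * W := by
        intro t
        rw [Fin.prod_univ_succAbove
          (fun j => ((Fin.insertNth k t y : Fin (m+1) → ℝ) j) ^ (α - 1)) k]
        simp [hW]
      have hFt : ∀ t ∈ Set.Ioi (0:ℝ),
          F (Fin.insertNth k t y) = (t ^ γ * |deriv v t| ^ pk) * W := by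
        intro t ht
        have ht' : 0 < t := ht
        rw [hF]
        simp only
        rw [Fin.insertNth_apply_same, hprod t]
        rw [show fderiv ℝ u (Fin.insertNth k t y) (Pi.single k 1) = deriv v t from
          ((hvd t).deriv).symm]
        rw [show |t ^ (1 - α) * deriv v t| = t ^ (1 - α) * |deriv v t| from by
          rw [abs_mul, abs_of_nonneg (Real.rpow_nonneg ht'.le _)]]
        rw [Real.mul_rpow (Real.rpow_nonneg ht'.le _) (abs_nonneg _), ← Real.rpow_mul ht'.le]
        have hexp : t ^ α * t ^ ((1 - α) * pk) * t ^ (α - 1) = t ^ γ := by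
          rw [← Real.rpow_add ht', ← Real.rpow_add ht']
        rw [← hexp]
        ring
      have hHt : ∀ t ∈ Set.Ioi (0:ℝ),
          H (Fin.insertNth k t y) = (v t ^ pk * t ^ (γ - pk)) * W := by
        intro t ht
        have ht' : 0 < t := ht
        rw [hH]
        simp only
        rw [Fin.insertNth_apply_same, hprod t, hvt t]
        have hexp2 : t ^ (-α * (pk - 1)) * t ^ (α - 1) = t ^ (γ - pk) := by
          rw [← Real.rpow_add ht']
          congr 1
          rw [hγ]; ring
        rw [← hexp2]
        ring
      have hFz : ∀ t ∉ Set.Ioi (0:ℝ), F (Fin.insertNth k t y) = 0 := by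
        intro t ht
        refine hF0 _ fun hmem => ht ?_
        have h1 := hΩpos (husubset hmem) k
        rwa [Fin.insertNth_apply_same] at h1
      have hHz : ∀ t ∉ Set.Ioi (0:ℝ), H (Fin.insertNth k t y) = 0 := by
        intro t ht
        refine hH0 _ fun hmem => ht ?_
        have h1 := hΩpos (husubset hmem) k
        rwa [Fin.insertNth_apply_same] at h1
      rw [← setIntegral_eq_integral_of_forall_compl_eq_zero hFz,
        ← setIntegral_eq_integral_of_forall_compl_eq_zero hHz,
        setIntegral_congr_fun measurableSet_Ioi hFt,
        setIntegral_congr_fun measurableSet_Ioi hHt,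
        integral_mul_const, integral_mul_const]
      have hhardy := hardy1d pk γ hpk1 hβ v hvC1 hvcs hvsupp hv0
      have hInn : 0 ≤ ∫ t in Set.Ioi (0:ℝ), v t ^ pk * t ^ (γ - pk) :=
        setIntegral_nonneg measurableSet_Ioi fun t ht =>
          mul_nonneg (Real.rpow_nonneg (hv0 t) _) (Real.rpow_nonneg (le_of_lt ht) _)
      have hc1c0 : ((α + a - pk) / pk) ^ pk ≤ ((γ - pk + 1) / pk) ^ pk := by
        apply Real.rpow_le_rpow
        · apply div_nonneg _ hpk0.le
          linarith [hpk2]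
        · apply (div_le_div_iff_of_pos_right hpk0).mpr
          nlinarith [hpk3]
        · exact hpk0.le
      calc ((α + a - pk) / pk) ^ pk * ((∫ t in Set.Ioi (0:ℝ), v t ^ pk * t ^ (γ - pk)) * W)
          = (((α + a - pk) / pk) ^ pk * ∫ t in Set.Ioi (0:ℝ), v t ^ pk * t ^ (γ - pk)) * W := by
            ring
        _ ≤ (((γ - pk + 1) / pk) ^ pk * ∫ t in Set.Ioi (0:ℝ), v t ^ pk * t ^ (γ - pk)) * W :=
            mul_le_mul_of_nonneg_right (mul_le_mul_of_nonneg_right hc1c0 hInn) hWpos.le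
        _ ≤ (∫ t in Set.Ioi (0:ℝ), t ^ γ * |deriv v t| ^ pk) * W :=
            mul_le_mul_of_nonneg_right hhardy hWpos.le
    · push_neg at hy0
      have h1 : (fun t : ℝ => F (Fin.insertNth k t y)) = fun _ => 0 :=
        funext fun t => hF0 _ (hy0 t)
      have h2 : (fun t : ℝ => H (Fin.insertNth k t y)) = fun _ => 0 :=
        funext fun t => hH0 _ (hy0 t)
      rw [h1, h2]
      simp
  calc ((α + a - pk) / pk) ^ pk * ∫ y : Fin m → ℝ, ∫ t : ℝ, H (Fin.insertNth k t y)
      = ∫ y : Fin m → ℝ, ((α + a - pk) / pk) ^ pk * ∫ t : ℝ, H (Fin.insertNth k t y) :=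
        (integral_const_mul _ _).symm
    _ ≤ ∫ y : Fin m → ℝ, ∫ t : ℝ, F (Fin.insertNth k t y) :=
        integral_mono (hIH.const_mul _) hIF fun y => hy_ineq y

/-- Anisotropic conformable Hardy inequality with weight `x_k^α`:
`∑ₖ ∫_Ω x_k^α |D^α_{x_k} u|^{p_k} d_α x
  ≥ ∑ₖ ((α+a-p_k)/p_k)^{p_k} ∫_Ω u^{p_k} x_k^{−α(p_k−1)} d_α x`. -/
theorem anisotropic_conformable_hardy_alpha_weight (α : ℝ)
    (hα : α ∈ Set.Ioc (0 : ℝ) 1)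
    (n : ℕ) (Ω : Set (Fin n → ℝ)) (hΩ : IsOpen Ω)
    (hΩpos : Ω ⊆ {x : Fin n → ℝ | ∀ k, 0 < x k})
    (a : ℝ) (ha : α < a)
    (p : Fin n → ℝ) (hp1 : ∀ k, 1 < p k) (hp2 : ∀ k, p k < a + α)
    (hp3 : ∀ k, p k * (1 - α) ≥ a - α)
    (u : (Fin n → ℝ) → ℝ) (hu : ContDiffOn ℝ 1 u Ω) (hu0 : ∀ x ∈ Ω, 0 ≤ u x)
    (husupp : HasCompactSupport u) (husubset : tsupport u ⊆ Ω) :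
    ∑ k, ∫ x in Ω, (x k) ^ α * |confPDeriv α u k x| ^ (p k) * ∏ j, (x j) ^ (α - 1)
      ≥ ∑ k, ((α + a - p k) / p k) ^ (p k)
          * ∫ x in Ω, u x ^ (p k) * (x k) ^ (-α * (p k - 1)) * ∏ j, (x j) ^ (α - 1) := by
  obtain ⟨hα0, hα1⟩ := hα
  have hu' : ContDiff ℝ 1 u := by
    rw [contDiff_iff_contDiffAt]
    intro x
    by_cases hx : x ∈ Ω
    · exact hu.contDiffAt (hΩ.mem_nhds hx)
    · have hx' : x ∉ tsupport u := fun h => hx (husubset h)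
      have hmem : (tsupport u)ᶜ ∈ 𝓝 x := (isClosed_tsupport u).isOpen_compl.mem_nhds hx'
      exact (contDiffAt_const (c := 0)).congr_of_eventuallyEq
        (Filter.eventuallyEq_of_mem hmem fun z hz => image_eq_zero_of_notMem_tsupport hz)
  have hu0' : ∀ x, 0 ≤ u x := by
    intro x
    by_cases hx : x ∈ Ω
    · exact hu0 x hx
    · rw [image_eq_zero_of_notMem_tsupport (fun h => hx (husubset h))]
  rw [ge_iff_le]
  refine Finset.sum_le_sum fun k _ => ?_
  obtain ⟨m, rfl⟩ : ∃ m, n = m + 1 := ⟨n - 1, (Nat.succ_pred_eq_of_pos k.pos).symm⟩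
  exact hardy_slice α a hα0 hα1 ha m Ω hΩ hΩpos k (p k) (hp1 k) (hp2 k) (hp3 k)
    u hu' hu0' husupp husubset
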